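/- Let 𝒴 ⊆ ℂⁿ be a p-dimensional subspace, let i ∈ {1, …, p} and t ∈ {i, …, n−p+i−1}, assume the i-th largest Ritz value η_i of A in 𝒴 satisfies η_i > λ_{t+1}, and let f : ℝ → ℝ satisfy |f(λ₁)| ≥ ⋯ ≥ |f(λ_t)| > max_{j ∈ {t+1, …, n}} |f(λⱼ)|. Then 𝒴' = f(A)𝒴 has dimension at least i, and the i-th largest Ritz value η'_i of A in 𝒴' satisfies: either η'_i ≥ λ_t, or 0 < (λ_t − η'_i)/(η'_i − λ_{t+1}) ≤ ((max_{j ∈ {t+1, …, n}} |f(λⱼ)|)² / |f(λ_t)|²) · (λ_t − η_i)/(η_i − λ_{t+1}). -/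

import Mathlib

/-- The Rayleigh quotient `ρ(v) = (vᴴAv)/(vᴴv)` of the Hermitian matrix `A`. -/
noncomputable def rayleigh {n : ℕ} (A : Matrix (Fin n) (Fin n) ℂ)
    (v : EuclideanSpace ℂ (Fin n)) : ℝ :=
  ((inner ℂ v (Matrix.toEuclideanLin A v) : ℂ)).re / ‖v‖ ^ 2

/-- The `i`-th largest Ritz value (1-indexed, `i ∈ {1, …, dim S}`) of the Hermitian
matrix `A` in the subspace `S`, characterized via the Courant–Fischer max-min
principle applied inside `S` (equivalently, the `i`-th largest eigenvalue of
`SᴴAS` for any orthonormal basis matrix `S`). -/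
noncomputable def ritzValue {n : ℕ} (A : Matrix (Fin n) (Fin n) ℂ)
    (S : Submodule ℂ (EuclideanSpace ℂ (Fin n))) (i : ℕ) : ℝ :=
  sSup {r : ℝ | ∃ T : Submodule ℂ (EuclideanSpace ℂ (Fin n)), T ≤ S ∧
    Module.finrank ℂ T = i ∧ ∀ v ∈ T, v ≠ 0 → r ≤ rayleigh A v}

/-- `f(A) = ∑ j, f(λ_j) x_j x_jᴴ` as a linear operator, for eigenvalues `lam`
and orthonormal eigenvectors `x` of `A`. -/
noncomputable def matFun {n : ℕ} (lam : Fin n → ℝ)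
    (x : Fin n → EuclideanSpace ℂ (Fin n)) (f : ℝ → ℝ) :
    EuclideanSpace ℂ (Fin n) →ₗ[ℂ] EuclideanSpace ℂ (Fin n) :=
  ∑ j : Fin n, (f (lam j) : ℂ) • ((innerSL ℂ (x j)).toLinearMap.smulRight (x j))

/-- `y` is a Ritz vector of `A` in `S` associated with the Ritz value `η`:
`y ∈ S`, `y ≠ 0`, `ρ(y) = η` and `Ay − ηy ⊥ S`. -/
def IsRitzVector {n : ℕ} (A : Matrix (Fin n) (Fin n) ℂ)
    (S : Submodule ℂ (EuclideanSpace ℂ (Fin n))) (η : ℝ)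
    (y : EuclideanSpace ℂ (Fin n)) : Prop :=
  y ∈ S ∧ y ≠ 0 ∧ rayleigh A y = η ∧
    ∀ v ∈ S, (inner ℂ v (Matrix.toEuclideanLin A y - (η : ℂ) • y) : ℂ) = 0

private lemma aux_re (r : ℝ) (z : ℂ) :
    ((starRingEnd ℂ) z * ((r : ℂ) * z)).re = r * Complex.normSq z := by
  simp [Complex.mul_re, Complex.mul_im, Complex.normSq_apply]
  ring

private lemma aux_re' (z : ℂ) : ((starRingEnd ℂ) z * z).re = Complex.normSq z := by
  simp [Complex.mul_re, Complex.normSq_apply]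

section setup

variable {n : ℕ} (hn : 0 < n)
  (A : Matrix (Fin n) (Fin n) ℂ)
  (lam : Fin n → ℝ)
  (x : Fin n → EuclideanSpace ℂ (Fin n)) (hx : Orthonormal ℂ x)
  (heig : ∀ j, Matrix.toEuclideanLin A (x j) = (lam j : ℂ) • x j)

include hn hx in
lemma expand (v : EuclideanSpace ℂ (Fin n)) :
    ∑ j, (inner ℂ (x j) v : ℂ) • x j = v := by
  have : Nonempty (Fin n) := ⟨⟨0, hn⟩⟩
  have hcard : Fintype.card (Fin n) = Module.finrank ℂ (EuclideanSpace ℂ (Fin n)) := by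
    simp
  have hspan : ⊤ ≤ Submodule.span ℂ (Set.range x) :=
    (hx.linearIndependent.span_eq_top_of_card_eq_finrank hcard).ge
  have hb : ⇑(OrthonormalBasis.mk hx hspan) = x := OrthonormalBasis.coe_mk hx hspan
  have := (OrthonormalBasis.mk hx hspan).sum_repr' v
  rwa [hb] at this

include hn hx in
lemma normsq_eq (v : EuclideanSpace ℂ (Fin n)) :
    ‖v‖ ^ 2 = ∑ j, Complex.normSq (inner ℂ (x j) v : ℂ) := by
  have h1 : (inner ℂ v v : ℂ) = ∑ j, (starRingEnd ℂ) (inner ℂ (x j) v : ℂ) * (inner ℂ (x j) v : ℂ) := by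
    conv_lhs => rw [← expand hn x hx v]
    exact hx.inner_sum _ _ _
  have h0 : (inner ℂ v v : ℂ) = ((‖v‖ ^ 2 : ℝ) : ℂ) := by
    exact_mod_cast inner_self_eq_norm_sq_to_K (𝕜 := ℂ) v
  have h2 := congrArg Complex.re (h0.symm.trans h1)
  rw [Complex.ofReal_re] at h2
  rw [h2, Complex.re_sum]
  exact Finset.sum_congr rfl fun j _ => aux_re' _

include hn hx heig in
lemma raynum_eq (v : EuclideanSpace ℂ (Fin n)) :
    ((inner ℂ v (Matrix.toEuclideanLin A v) : ℂ)).re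
      = ∑ j, lam j * Complex.normSq (inner ℂ (x j) v : ℂ) := by
  have hAv : Matrix.toEuclideanLin A v = ∑ j, ((lam j : ℂ) * (inner ℂ (x j) v : ℂ)) • x j := by
    conv_lhs => rw [← expand hn x hx v]
    rw [map_sum]
    exact Finset.sum_congr rfl fun j _ => by rw [map_smul, heig j, smul_smul, mul_comm]
  have h1 := hx.inner_sum (fun j => (inner ℂ (x j) v : ℂ))
    (fun j => (lam j : ℂ) * (inner ℂ (x j) v : ℂ)) Finset.univ
  rw [expand hn x hx v, ← hAv] at h1
  rw [h1, Complex.re_sum]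
  exact Finset.sum_congr rfl fun j _ => aux_re _ _

include hn hx heig in
lemma rayleigh_eq (v : EuclideanSpace ℂ (Fin n)) :
    rayleigh A v = (∑ j, lam j * Complex.normSq (inner ℂ (x j) v : ℂ))
      / (∑ j, Complex.normSq (inner ℂ (x j) v : ℂ)) := by
  rw [rayleigh, raynum_eq hn A lam x hx heig v, normsq_eq hn x hx v]

include hx in
lemma matFun_coeff (f : ℝ → ℝ) (v : EuclideanSpace ℂ (Fin n)) (k : Fin n) :
    (inner ℂ (x k) (matFun lam x f v) : ℂ) = (f (lam k) : ℂ) * (inner ℂ (x k) v : ℂ) := by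
  have : matFun lam x f v = ∑ j, ((f (lam j) : ℂ) * (inner ℂ (x j) v : ℂ)) • x j := by
    rw [matFun]
    simp only [LinearMap.sum_apply, LinearMap.smul_apply, LinearMap.smulRight_apply,
      ContinuousLinearMap.coe_coe, innerSL_apply_apply, smul_smul]
  rw [this, hx.inner_right_fintype]

include hn hx in
lemma sumsq_pos {v : EuclideanSpace ℂ (Fin n)} (hv : v ≠ 0) :
    0 < ∑ j, Complex.normSq (inner ℂ (x j) v : ℂ) := by
  rw [← normsq_eq hn x hx v]
  have : 0 < ‖v‖ := norm_pos_iff.mpr hv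
  positivity

end setup

lemma corealg {F ν δ x P S h l Nw Dw : ℝ}
    (hν : 0 ≤ ν) (hF : ν < F) (hx : 0 < x) (hxδ : x ≤ δ)
    (hP : 0 ≤ P) (hS : 0 ≤ S) (hh : 0 ≤ h) (hl : 0 ≤ l)
    (hcon : x * (h + l) - δ * h ≤ P - S)
    (hNw : Nw ≤ ν^2 * (S + δ * l) - F^2 * P)
    (hDw : F^2 * (P + δ * h) - ν^2 * S ≤ Dw) :
    F^2 * Nw * x ≤ ν^2 * (δ - x) * Dw := by
  have hF0 : 0 < F := lt_of_le_of_lt hν hF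
  have hδx : 0 ≤ δ - x := by linarith
  have hδ0 : 0 ≤ δ := by linarith
  have hν2F2 : ν^2 ≤ F^2 := by nlinarith
  have step1 : F^2 * Nw * x ≤ F^2 * (ν^2 * (S + δ * l) - F^2 * P) * x := by
    have h1 : Nw * x ≤ (ν^2 * (S + δ * l) - F^2 * P) * x :=
      mul_le_mul_of_nonneg_right hNw hx.le
    have h2 := mul_le_mul_of_nonneg_left h1 (sq_nonneg F)
    linarith
  have step2 : ν^2 * (δ - x) * (F^2 * (P + δ * h) - ν^2 * S) ≤ ν^2 * (δ - x) * Dw := by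
    have h2 := mul_le_mul_of_nonneg_left hDw (mul_nonneg (sq_nonneg ν) hδx)
    linarith
  have key : F^2 * (ν^2 * (S + δ * l) - F^2 * P) * x
      ≤ ν^2 * (δ - x) * (F^2 * (P + δ * h) - ν^2 * S) := by
    have hC0 : 0 ≤ F^2 * x + ν^2 * (δ - x) := by positivity
    have hmain : F^2 * ν^2 * δ * (x * (h + l) - δ * h)
        ≤ (F^2 * P - ν^2 * S) * (F^2 * x + ν^2 * (δ - x)) := by
      rcases le_or_gt 0 (x * (h + l) - δ * h) with hZ0 | hZ0
      · have hW1 : F^2 * (x * (h + l) - δ * h) ≤ F^2 * P - ν^2 * S := by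
          have h1 := mul_le_mul_of_nonneg_left hcon (sq_nonneg F)
          have h2 := mul_le_mul_of_nonneg_right hν2F2 hS
          linarith
        have hC1 : ν^2 * δ ≤ F^2 * x + ν^2 * (δ - x) := by
          have := mul_le_mul_of_nonneg_right hν2F2 hx.le
          linarith
        have t1 := mul_le_mul_of_nonneg_right hW1 hC0
        have t2 := mul_le_mul_of_nonneg_left hC1
          (mul_nonneg (sq_nonneg F) hZ0)
        nlinarith [t1, t2]
      · rcases le_or_gt 0 (F^2 * P - ν^2 * S) with hW0 | hW0
        · have t1 := mul_nonneg hW0 hC0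
          have t2 : F^2 * ν^2 * δ * (x * (h + l) - δ * h) ≤ 0 :=
            mul_nonpos_of_nonneg_of_nonpos (by positivity) hZ0.le
          linarith
        · have hW1 : ν^2 * (x * (h + l) - δ * h) ≤ F^2 * P - ν^2 * S := by
            have h1 := mul_le_mul_of_nonneg_left hcon (sq_nonneg ν)
            have h2 := mul_le_mul_of_nonneg_right hν2F2 hP
            linarith
          have hC1 : F^2 * x + ν^2 * (δ - x) ≤ F^2 * δ := by
            have := mul_le_mul_of_nonneg_right hν2F2 hδx
            linarith
          have t1 := mul_le_mul_of_nonneg_right hW1 hC0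
          have t2 := mul_le_mul_of_nonpos_left hC1
            (le_of_lt (by nlinarith : ν^2 * (x * (h + l) - δ * h) < 0)
              : ν^2 * (x * (h + l) - δ * h) ≤ 0)
          nlinarith [t1, t2]
    nlinarith [hmain]
  linarith

private lemma sum_lin {n : ℕ} (s : Finset (Fin n)) (g1 g2 : Fin n → ℝ) (c1 c2 : ℝ) :
    c1 * (∑ j ∈ s, g1 j) + c2 * (∑ j ∈ s, g2 j) = ∑ j ∈ s, (c1 * g1 j + c2 * g2 j) := by
  rw [Finset.mul_sum, Finset.mul_sum, ← Finset.sum_add_distrib]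

lemma pervec {n t : ℕ} (hn : 0 < n) (htlt : t < n) (ht1 : t - 1 < n) (ht0 : 1 ≤ t)
    (A : Matrix (Fin n) (Fin n) ℂ) (lam : Fin n → ℝ) (hlam : Antitone lam)
    (x : Fin n → EuclideanSpace ℂ (Fin n)) (hx : Orthonormal ℂ x)
    (heig : ∀ j, Matrix.toEuclideanLin A (x j) = (lam j : ℂ) • x j)
    (f : ℝ → ℝ) (νt : ℝ) (hν0 : 0 ≤ νt)
    (hgt : νt < |f (lam ⟨t-1, ht1⟩)|)
    (hfhead : ∀ j : Fin n, (j : ℕ) < t → |f (lam ⟨t-1, ht1⟩)| ≤ |f (lam j)|)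
    (hftail : ∀ j : Fin n, t ≤ (j : ℕ) → |f (lam j)| ≤ νt)
    (r : ℝ) (hbr : lam ⟨t, htlt⟩ < r)
    (v : EuclideanSpace ℂ (Fin n)) (hv : v ≠ 0) (hrv : r ≤ rayleigh A v) :
    matFun lam x f v ≠ 0 ∧
    lam ⟨t, htlt⟩ < rayleigh A (matFun lam x f v) ∧
    (lam ⟨t-1, ht1⟩ ≤ r → lam ⟨t-1, ht1⟩ ≤ rayleigh A (matFun lam x f v)) ∧
    (r ≤ lam ⟨t-1, ht1⟩ →
      |f (lam ⟨t-1, ht1⟩)|^2 * ((lam ⟨t-1, ht1⟩ - rayleigh A (matFun lam x f v)) * (r - lam ⟨t, htlt⟩))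
        ≤ νt^2 * ((lam ⟨t-1, ht1⟩ - r) * (rayleigh A (matFun lam x f v) - lam ⟨t, htlt⟩))) := by
  classical
  obtain ⟨a, ha⟩ : ∃ y : ℝ, y = lam ⟨t-1, ht1⟩ := ⟨_, rfl⟩
  obtain ⟨b, hb⟩ : ∃ y : ℝ, y = lam ⟨t, htlt⟩ := ⟨_, rfl⟩
  obtain ⟨F, hF⟩ : ∃ y : ℝ, y = |f (lam ⟨t-1, ht1⟩)| := ⟨_, rfl⟩
  have hgt' : νt < F := by rw [hF]; exact hgt
  have hbr' : b < r := by rw [hb]; exact hbr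
  have hfhead' : ∀ j : Fin n, (j : ℕ) < t → F ≤ |f (lam j)| := fun j hj => by
    rw [hF]; exact hfhead j hj
  rw [← hF, ← ha, ← hb]
  have hF0 : 0 < F := lt_of_le_of_lt hν0 hgt' 
  have hab : b ≤ a := by
    rw [ha, hb]; exact hlam (by simp only [Fin.mk_le_mk]; omega)
  have hlamhead : ∀ j : Fin n, (j : ℕ) < t → a ≤ lam j := fun j hj => by
    rw [ha]; exact hlam (show j ≤ (⟨t-1, ht1⟩ : Fin n) by simp only [Fin.le_def]; omega)
  have hlamtail : ∀ j : Fin n, t ≤ (j : ℕ) → lam j ≤ b := fun j hj => by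
    rw [hb]; exact hlam (show (⟨t, htlt⟩ : Fin n) ≤ j by simp only [Fin.le_def]; omega)
  have hfhead2 : ∀ j : Fin n, (j : ℕ) < t → F^2 ≤ (f (lam j))^2 := by
    intro j hj
    have h1 := hfhead' j hj
    calc F^2 ≤ |f (lam j)|^2 := pow_le_pow_left₀ hF0.le h1 2
    _ = (f (lam j))^2 := sq_abs _
  have hftail2 : ∀ j : Fin n, t ≤ (j : ℕ) → (f (lam j))^2 ≤ νt^2 := by
    intro j hj
    have h1 := hftail j hj
    calc (f (lam j))^2 = |f (lam j)|^2 := (sq_abs _).symm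
    _ ≤ νt^2 := pow_le_pow_left₀ (abs_nonneg _) h1 2
  -- opaque coefficients
  obtain ⟨w, hw⟩ : ∃ u, u = matFun lam x f v := ⟨_, rfl⟩
  obtain ⟨α, hα⟩ : ∃ g : Fin n → ℝ, g = fun j => Complex.normSq (inner ℂ (x j) v : ℂ) := ⟨_, rfl⟩
  obtain ⟨β, hβ⟩ : ∃ g : Fin n → ℝ, g = fun j => Complex.normSq (inner ℂ (x j) w : ℂ) := ⟨_, rfl⟩
  have hα0 : ∀ j, 0 ≤ α j := fun j => by simp only [hα]; exact Complex.normSq_nonneg _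
  have hβα : ∀ j, β j = (f (lam j))^2 * α j := by
    intro j
    simp only [hβ, hα, hw, matFun_coeff lam x hx f v j]
    rw [Complex.normSq_mul, Complex.normSq_ofReal]
    ring
  have hβ0 : ∀ j, 0 ≤ β j := fun j => by simp only [hβ]; exact Complex.normSq_nonneg _
  obtain ⟨σ, hσdef⟩ : ∃ y : ℝ, y = ∑ j, α j := ⟨_, rfl⟩
  have hσpos : 0 < σ := by
    rw [hσdef]; simp only [hα]; exact sumsq_pos hn x hx hv
  have hrayv : rayleigh A v = (∑ j, lam j * α j) / σ := by
    rw [hσdef]; simp only [hα]; exact rayleigh_eq hn A lam x hx heig v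
  -- head/tail split
  obtain ⟨hd, hhd⟩ : ∃ y : ℝ, y = ∑ j ∈ Finset.univ.filter (fun j : Fin n => (j : ℕ) < t), α j :=
    ⟨_, rfl⟩
  obtain ⟨tl, htl⟩ : ∃ y : ℝ, y = ∑ j ∈ Finset.univ.filter (fun j : Fin n => ¬ (j : ℕ) < t), α j :=
    ⟨_, rfl⟩
  obtain ⟨P, hP⟩ : ∃ y : ℝ,
      y = ∑ j ∈ Finset.univ.filter (fun j : Fin n => (j : ℕ) < t), α j * (lam j - a) := ⟨_, rfl⟩
  obtain ⟨S, hS⟩ : ∃ y : ℝ,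
      y = ∑ j ∈ Finset.univ.filter (fun j : Fin n => ¬ (j : ℕ) < t), α j * (b - lam j) := ⟨_, rfl⟩
  obtain ⟨δ, hδ⟩ : ∃ y : ℝ, y = a - b := ⟨_, rfl⟩
  have hδ0 : 0 ≤ δ := by rw [hδ]; linarith
  have hP0 : 0 ≤ P := by
    rw [hP]
    refine Finset.sum_nonneg fun j hj => ?_
    have hjt : (j : ℕ) < t := (Finset.mem_filter.mp hj).2
    have h2 := hlamhead j hjt
    exact mul_nonneg (hα0 j) (by linarith only [h2])
  have hS0 : 0 ≤ S := by
    rw [hS]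
    refine Finset.sum_nonneg fun j hj => ?_
    have hjt : ¬ (j : ℕ) < t := (Finset.mem_filter.mp hj).2
    have h2 := hlamtail j (by omega)
    exact mul_nonneg (hα0 j) (by linarith only [h2])
  have hhd0 : 0 ≤ hd := by rw [hhd]; exact Finset.sum_nonneg fun j _ => hα0 j
  have htl0 : 0 ≤ tl := by rw [htl]; exact Finset.sum_nonneg fun j _ => hα0 j
  have hσsplit : σ = hd + tl := by
    rw [hσdef, hhd, htl, Finset.sum_filter_add_sum_filter_not]
  have hDv : ∑ j, α j * (lam j - b) = P + δ * hd - S := by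
    rw [← Finset.sum_filter_add_sum_filter_not Finset.univ (fun j : Fin n => (j : ℕ) < t)
      (fun j => α j * (lam j - b))]
    have e1 : ∑ j ∈ Finset.univ.filter (fun j : Fin n => (j : ℕ) < t), α j * (lam j - b)
        = P + δ * hd := by
      rw [hP, hhd, Finset.mul_sum, ← Finset.sum_add_distrib]
      exact Finset.sum_congr rfl fun j _ => by rw [hδ]; ring
    have e2 : ∑ j ∈ Finset.univ.filter (fun j : Fin n => ¬ (j : ℕ) < t), α j * (lam j - b)
        = -S := by
      rw [hS, ← Finset.sum_neg_distrib]
      exact Finset.sum_congr rfl fun j _ => by ring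
    rw [e1, e2]; ring
  have hlamsum : ∑ j, lam j * α j = (P + δ * hd - S) + b * σ := by
    rw [← hDv, hσdef, Finset.mul_sum, ← Finset.sum_add_distrib]
    exact Finset.sum_congr rfl fun j _ => by ring
  obtain ⟨x0, hx0⟩ : ∃ y : ℝ, y = r - b := ⟨_, rfl⟩
  have hx0pos : 0 < x0 := by rw [hx0]; linarith [hbr']
  have hcon : x0 * (hd + tl) - δ * hd ≤ P - S := by
    have h1 : r * σ ≤ ∑ j, lam j * α j := by
      rw [hrayv] at hrv
      exact (le_div_iff₀ hσpos).mp hrv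
    rw [hlamsum, hσsplit] at h1
    rw [hx0]
    linarith only [h1]
  obtain ⟨Nw, hNwdef⟩ : ∃ y : ℝ, y = ∑ j, β j * (a - lam j) := ⟨_, rfl⟩
  obtain ⟨Dw, hDwdef⟩ : ∃ y : ℝ, y = ∑ j, β j * (lam j - b) := ⟨_, rfl⟩
  have hNwle : Nw ≤ νt^2 * (S + δ * tl) - F^2 * P := by
    rw [hNwdef, ← Finset.sum_filter_add_sum_filter_not Finset.univ (fun j : Fin n => (j : ℕ) < t)
      (fun j => β j * (a - lam j))]
    have e1 : ∑ j ∈ Finset.univ.filter (fun j : Fin n => (j : ℕ) < t), β j * (a - lam j)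
        ≤ -(F^2 * P) := by
      rw [hP, Finset.mul_sum, ← Finset.sum_neg_distrib]
      apply Finset.sum_le_sum
      intro j hj
      have hjt : (j : ℕ) < t := (Finset.mem_filter.mp hj).2
      have h1 := hfhead2 j hjt
      have h2 := hlamhead j hjt
      have h3 := hα0 j
      rw [hβα j]
      have h5 : 0 ≤ α j * (lam j - a) := mul_nonneg h3 (by linarith only [h2])
      have h6 := mul_le_mul_of_nonneg_right h1 h5
      linarith only [h6]
    have e2 : ∑ j ∈ Finset.univ.filter (fun j : Fin n => ¬ (j : ℕ) < t), β j * (a - lam j)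
        ≤ νt^2 * (S + δ * tl) := by
      have e2' : νt^2 * (S + δ * tl)
          = ∑ j ∈ Finset.univ.filter (fun j : Fin n => ¬ (j : ℕ) < t),
            (νt^2 * (α j * (b - lam j)) + νt^2 * δ * α j) := by
        rw [hS, htl, ← sum_lin]
        ring
      rw [e2']
      apply Finset.sum_le_sum
      intro j hj
      have hjt : ¬ (j : ℕ) < t := (Finset.mem_filter.mp hj).2
      have h1 := hftail2 j (by omega)
      have h2 := hlamtail j (by omega)
      have h3 := hα0 j
      rw [hβα j]
      have h5 : 0 ≤ α j * (a - lam j) := mul_nonneg h3 (by linarith only [h2, hab])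
      have h6 := mul_le_mul_of_nonneg_right h1 h5
      rw [hδ]
      linarith only [h6]
    linarith
  have hDwge : F^2 * (P + δ * hd) - νt^2 * S ≤ Dw := by
    rw [hDwdef, ← Finset.sum_filter_add_sum_filter_not Finset.univ (fun j : Fin n => (j : ℕ) < t)
      (fun j => β j * (lam j - b))]
    have e1 : F^2 * (P + δ * hd)
        ≤ ∑ j ∈ Finset.univ.filter (fun j : Fin n => (j : ℕ) < t), β j * (lam j - b) := by
      have e1' : F^2 * (P + δ * hd)
          = ∑ j ∈ Finset.univ.filter (fun j : Fin n => (j : ℕ) < t),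
            (F^2 * (α j * (lam j - a)) + F^2 * δ * α j) := by
        rw [hP, hhd, ← sum_lin]
        ring
      rw [e1']
      apply Finset.sum_le_sum
      intro j hj
      have hjt : (j : ℕ) < t := (Finset.mem_filter.mp hj).2
      have h1 := hfhead2 j hjt
      have h2 := hlamhead j hjt
      have h3 := hα0 j
      rw [hβα j]
      have h5 : 0 ≤ α j * (lam j - b) := mul_nonneg h3 (by linarith only [h2, hab])
      have h6 := mul_le_mul_of_nonneg_right h1 h5
      rw [hδ]
      linarith only [h6]
    have e2 : -(νt^2 * S)
        ≤ ∑ j ∈ Finset.univ.filter (fun j : Fin n => ¬ (j : ℕ) < t), β j * (lam j - b) := by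
      rw [hS, Finset.mul_sum, ← Finset.sum_neg_distrib]
      apply Finset.sum_le_sum
      intro j hj
      have hjt : ¬ (j : ℕ) < t := (Finset.mem_filter.mp hj).2
      have h1 := hftail2 j (by omega)
      have h2 := hlamtail j (by omega)
      have h3 := hα0 j
      rw [hβα j]
      have h5 : 0 ≤ α j * (b - lam j) := mul_nonneg h3 (by linarith only [h2])
      have h6 := mul_le_mul_of_nonneg_right h1 h5
      linarith only [h6]
    linarith
  have hν2F2 : νt^2 ≤ F^2 := pow_le_pow_left₀ hν0 hgt'.le 2
  have hDwpos : 0 < Dw := by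
    have h1 : x0 * σ ≤ P + δ * hd - S := by
      rw [hσsplit]; linarith only [hcon]
    have h2 : νt^2 * S ≤ F^2 * S := mul_le_mul_of_nonneg_right hν2F2 hS0
    have h3 : 0 < x0 * σ := mul_pos hx0pos hσpos
    have h4 := mul_le_mul_of_nonneg_left h1 (sq_nonneg F)
    have h5 : 0 < F^2 * (x0 * σ) := by positivity
    linarith only [hDwge, h2, h4, h5]
  have hw0 : w ≠ 0 := by
    intro hww
    have : Dw = 0 := by
      rw [hDwdef]
      apply Finset.sum_eq_zero
      intro j _
      have hz : β j = 0 := by simp only [hβ, hww]; simp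
      rw [hz]; ring
    linarith
  obtain ⟨σw, hσwdef⟩ : ∃ y : ℝ, y = ∑ j, β j := ⟨_, rfl⟩
  have hσwpos : 0 < σw := by
    rw [hσwdef]; simp only [hβ]; exact sumsq_pos hn x hx hw0
  have hrayw : rayleigh A w = (∑ j, lam j * β j) / σw := by
    rw [hσwdef]; simp only [hβ]; exact rayleigh_eq hn A lam x hx heig w
  have hlamsumw : ∑ j, lam j * β j = Dw + b * σw := by
    rw [hDwdef, hσwdef, Finset.mul_sum, ← Finset.sum_add_distrib]
    exact Finset.sum_congr rfl fun j _ => by ring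
  have hNwId : Nw = a * σw - (Dw + b * σw) := by
    rw [hNwdef, hσwdef, hDwdef, Finset.mul_sum, Finset.mul_sum, ← Finset.sum_add_distrib,
      ← Finset.sum_sub_distrib]
    exact Finset.sum_congr rfl fun j _ => by ring
  have hblt : b < rayleigh A w := by
    rw [hrayw, lt_div_iff₀ hσwpos, hlamsumw]
    linarith only [hDwpos]
  rw [← hw]
  refine ⟨hw0, hblt, ?_, ?_⟩
  · intro har
    have hxδ' : δ ≤ x0 := by rw [hδ, hx0]; linarith
    have hNwle0 : Nw ≤ 0 := by
      have h1 : νt^2 * (S + δ * tl) ≤ F^2 * (S + δ * tl) :=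
        mul_le_mul_of_nonneg_right hν2F2 (by positivity)
      have h2 : S + δ * tl - P ≤ (δ - x0) * σ := by
        rw [hσsplit]; linarith only [hcon]
      have h3 : (δ - x0) * σ ≤ 0 := mul_nonpos_of_nonpos_of_nonneg (by linarith) hσpos.le
      have h4 := mul_le_mul_of_nonneg_left (h2.trans h3) (sq_nonneg F)
      linarith only [hNwle, h1, h4]
    rw [hrayw, le_div_iff₀ hσwpos, hlamsumw]
    linarith only [hNwId, hNwle0]
  · intro hra
    have hxδ : x0 ≤ δ := by rw [hδ, hx0]; linarith
    have hkey := corealg hν0 hgt' hx0pos hxδ hP0 hS0 hhd0 htl0 hcon hNwle hDwge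
    have e1 : a - rayleigh A w = Nw / σw := by
      rw [hrayw, hlamsumw, hNwId]
      field_simp
    have e2 : rayleigh A w - b = Dw / σw := by
      rw [hrayw, hlamsumw]
      field_simp
      ring
    have hfinal : F^2 * Nw * x0 ≤ νt^2 * (a - r) * Dw := by
      have hh : δ - x0 = a - r := by rw [hδ, hx0]; ring
      rw [← hh]; exact hkey
    rw [e1, e2, ← hx0]
    rw [show F^2 * (Nw / σw * x0) = (F^2 * Nw * x0) / σw by ring,
      show νt^2 * ((a - r) * (Dw / σw)) = (νt^2 * (a - r) * Dw) / σw by ring]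
    exact (div_le_div_iff_of_pos_right hσwpos).mpr hfinal


open Topology Filter in
/-- (Theorem 3.6.) If the `i`-th largest Ritz value `η_i` of `A`
in `𝒴` satisfies `η_i > λ_{t+1}` for some `t ∈ {i,…,n−p+i−1}` (encoded as `i ≤ t`
and `t + p < n + i`) and `|f(λ₁)| ≥ ⋯ ≥ |f(λ_t)| > max_{j>t}|f(λ_j)| = ν_t`, then
`𝒴' = f(A)𝒴` has dimension at least `i` and its `i`-th largest Ritz value `η'_i`
satisfies: either `η'_i ≥ λ_t`, or
`0 < (λ_t − η'_i)/(η'_i − λ_{t+1}) ≤ (ν_t²/|f(λ_t)|²)·(λ_t − η_i)/(η_i − λ_{t+1})`.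
(0-indexed: `lam ⟨j⟩` is `λ_{j+1}`.) -/
theorem stmt14 {n p i t : ℕ} (hi : 1 ≤ i) (hip : i ≤ p) (hpn : p < n)
    (hit : i ≤ t) (htn : t + p < n + i)
    (A : Matrix (Fin n) (Fin n) ℂ) (hA : A.IsHermitian)
    (lam : Fin n → ℝ) (hlam : Antitone lam)
    (x : Fin n → EuclideanSpace ℂ (Fin n)) (hx : Orthonormal ℂ x)
    (heig : ∀ j, Matrix.toEuclideanLin A (x j) = (lam j : ℂ) • x j)
    (Y : Submodule ℂ (EuclideanSpace ℂ (Fin n))) (hY : Module.finrank ℂ Y = p)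
    (hηi : lam ⟨t, by omega⟩ < ritzValue A Y i)
    (f : ℝ → ℝ) (νt : ℝ)
    (hνt : IsGreatest ((fun j => |f (lam j)|) '' {j : Fin n | t ≤ (j : ℕ)}) νt)
    (hmono : ∀ j k : Fin n, (j : ℕ) ≤ (k : ℕ) → (k : ℕ) < t →
      |f (lam k)| ≤ |f (lam j)|)
    (hgt : νt < |f (lam ⟨t - 1, by omega⟩)|) :
    i ≤ Module.finrank ℂ (Y.map (matFun lam x f)) ∧
    (lam ⟨t - 1, by omega⟩ ≤ ritzValue A (Y.map (matFun lam x f)) i ∨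
      (0 < (lam ⟨t - 1, by omega⟩ - ritzValue A (Y.map (matFun lam x f)) i) /
          (ritzValue A (Y.map (matFun lam x f)) i - lam ⟨t, by omega⟩) ∧
        (lam ⟨t - 1, by omega⟩ - ritzValue A (Y.map (matFun lam x f)) i) /
            (ritzValue A (Y.map (matFun lam x f)) i - lam ⟨t, by omega⟩) ≤
          νt ^ 2 / |f (lam ⟨t - 1, by omega⟩)| ^ 2 *
            ((lam ⟨t - 1, by omega⟩ - ritzValue A Y i) /
              (ritzValue A Y i - lam ⟨t, by omega⟩)))) := by
  classical
  have hn : 0 < n := by omega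
  have htlt : t < n := by omega
  have ht1 : t - 1 < n := by omega
  have ht0 : 1 ≤ t := hi.trans hit
  set a : ℝ := lam ⟨t - 1, ht1⟩ with ha
  set bb : ℝ := lam ⟨t, htlt⟩ with hbb
  set F : ℝ := |f a| with hF
  set L : EuclideanSpace ℂ (Fin n) →ₗ[ℂ] EuclideanSpace ℂ (Fin n) := matFun lam x f with hL
  have hηi' : bb < ritzValue A Y i := hηi
  have hgt' : νt < F := hgt
  have hν0 : 0 ≤ νt := by
    obtain ⟨jy, hjy, hje⟩ := hνt.1
    rw [← hje]; exact abs_nonneg _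
  have hF0 : 0 < F := lt_of_le_of_lt hν0 hgt'
  have hab : bb ≤ a := hlam (by simp only [Fin.mk_le_mk]; omega)
  have hfhead : ∀ j : Fin n, (j : ℕ) < t → |f (lam ⟨t - 1, ht1⟩)| ≤ |f (lam j)| :=
    fun j hj => hmono j ⟨t - 1, ht1⟩ (by simp only [Fin.val_mk]; omega)
      (by simp only [Fin.val_mk]; omega)
  have hftail : ∀ j : Fin n, t ≤ (j : ℕ) → |f (lam j)| ≤ νt := fun j hj =>
    hνt.2 ⟨j, hj, rfl⟩
  -- Rayleigh quotient global bounds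
  have hraylb : ∀ v : EuclideanSpace ℂ (Fin n), v ≠ 0 → lam ⟨n - 1, by omega⟩ ≤ rayleigh A v := by
    intro v hv
    have hσ := sumsq_pos hn x hx hv
    rw [rayleigh_eq hn A lam x hx heig v, le_div_iff₀ hσ, Finset.mul_sum]
    apply Finset.sum_le_sum
    intro j _
    have h1 : lam ⟨n - 1, by omega⟩ ≤ lam j :=
      hlam (show j ≤ (⟨n - 1, by omega⟩ : Fin n) by simp only [Fin.le_def, Fin.val_mk]; omega)
    exact mul_le_mul_of_nonneg_right h1 (Complex.normSq_nonneg _)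
  have hrayub : ∀ v : EuclideanSpace ℂ (Fin n), v ≠ 0 → rayleigh A v ≤ lam ⟨0, hn⟩ := by
    intro v hv
    have hσ := sumsq_pos hn x hx hv
    rw [rayleigh_eq hn A lam x hx heig v, div_le_iff₀ hσ, Finset.mul_sum]
    apply Finset.sum_le_sum
    intro j _
    have h1 : lam j ≤ lam ⟨0, hn⟩ :=
      hlam (show (⟨0, hn⟩ : Fin n) ≤ j by simp only [Fin.le_def, Fin.val_mk]; omega)
    exact mul_le_mul_of_nonneg_right h1 (Complex.normSq_nonneg _)
  -- bounded above
  have hbdd : ∀ W : Submodule ℂ (EuclideanSpace ℂ (Fin n)),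
      BddAbove {r : ℝ | ∃ T : Submodule ℂ (EuclideanSpace ℂ (Fin n)), T ≤ W ∧
        Module.finrank ℂ T = i ∧ ∀ v ∈ T, v ≠ 0 → r ≤ rayleigh A v} := by
    intro W
    refine ⟨lam ⟨0, hn⟩, ?_⟩
    rintro r ⟨T, hTW, hrk, hlb⟩
    have hTne : T ≠ ⊥ := by
      intro h
      rw [h, finrank_bot] at hrk
      omega
    obtain ⟨v, hvT, hv0⟩ := Submodule.exists_mem_ne_zero_of_ne_bot hTne
    exact (hlb v hvT hv0).trans (hrayub v hv0)
  -- nonempty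
  have hne : Set.Nonempty {r : ℝ | ∃ T : Submodule ℂ (EuclideanSpace ℂ (Fin n)), T ≤ Y ∧
      Module.finrank ℂ T = i ∧ ∀ v ∈ T, v ≠ 0 → r ≤ rayleigh A v} := by
    have hYfin : FiniteDimensional ℂ Y := inferInstance
    let BY := Module.finBasis ℂ Y
    have hip' : i ≤ Module.finrank ℂ Y := by rw [hY]; omega
    let emb : Fin i → Fin (Module.finrank ℂ Y) := Fin.castLE hip'
    let g : Fin i → EuclideanSpace ℂ (Fin n) := fun k => (BY (emb k) : EuclideanSpace ℂ (Fin n))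
    have hembinj : Function.Injective emb := Fin.castLE_injective hip'
    have hgli : LinearIndependent ℂ g :=
      (BY.linearIndependent.comp emb hembinj).map' Y.subtype (Submodule.ker_subtype Y)
    refine ⟨lam ⟨n - 1, by omega⟩, Submodule.span ℂ (Set.range g), ?_, ?_, ?_⟩
    · rw [Submodule.span_le]
      rintro _ ⟨k, rfl⟩
      exact SetLike.coe_mem _
    · rw [finrank_span_eq_card hgli, Fintype.card_fin]
    · exact fun v _ hv0 => hraylb v hv0
  have hSy : ritzValue A Y i = sSup {r : ℝ | ∃ T : Submodule ℂ (EuclideanSpace ℂ (Fin n)),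
      T ≤ Y ∧ Module.finrank ℂ T = i ∧ ∀ v ∈ T, v ≠ 0 → r ≤ rayleigh A v} := rfl
  have hSy' : ritzValue A (Y.map L) i = sSup {r : ℝ |
      ∃ T : Submodule ℂ (EuclideanSpace ℂ (Fin n)), T ≤ Y.map L ∧
      Module.finrank ℂ T = i ∧ ∀ v ∈ T, v ≠ 0 → r ≤ rayleigh A v} := rfl
  -- extraction of subspaces
  have exT : ∀ r : ℝ, r < ritzValue A Y i →
      ∃ T : Submodule ℂ (EuclideanSpace ℂ (Fin n)), T ≤ Y ∧ Module.finrank ℂ T = i ∧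
        ∀ v ∈ T, v ≠ 0 → r ≤ rayleigh A v := by
    intro r hr
    rw [hSy] at hr
    obtain ⟨s, hsmem, hrs⟩ := exists_lt_of_lt_csSup hne hr
    obtain ⟨T, h1, h2, h3⟩ := hsmem
    exact ⟨T, h1, h2, fun v hv h0 => hrs.le.trans (h3 v hv h0)⟩
  have mapT : ∀ r : ℝ, bb < r → r < ritzValue A Y i →
      ∃ T' : Submodule ℂ (EuclideanSpace ℂ (Fin n)), T' ≤ Y.map L ∧
        Module.finrank ℂ T' = i ∧
        ∀ w ∈ T', w ≠ 0 → ∃ v, v ≠ 0 ∧ r ≤ rayleigh A v ∧ w = L v := by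
    intro r hbr hrη
    obtain ⟨T, hTY, hTrk, hTlb⟩ := exT r hrη
    refine ⟨T.map L, Submodule.map_mono hTY, ?_, ?_⟩
    · have hinj : Function.Injective (L.comp T.subtype) := by
        rw [← LinearMap.ker_eq_bot, Submodule.eq_bot_iff]
        intro u hu
        rw [LinearMap.mem_ker, LinearMap.comp_apply] at hu
        by_contra h0
        have hu0 : (u : EuclideanSpace ℂ (Fin n)) ≠ 0 := by
          simpa using h0
        exact (pervec hn htlt ht1 ht0 A lam hlam x hx heig f νt hν0 hgt hfhead hftail
          r hbr (u : EuclideanSpace ℂ (Fin n)) hu0 (hTlb u u.2 hu0)).1 hu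
      have hrange : T.map L = LinearMap.range (L.comp T.subtype) := by
        rw [LinearMap.range_comp, Submodule.range_subtype]
      rw [hrange, LinearMap.finrank_range_of_inj hinj]
      exact hTrk
    · intro w hw hw0
      rw [Submodule.mem_map] at hw
      obtain ⟨v, hvT, hvw⟩ := hw
      have hv0 : v ≠ 0 := by
        intro h
        rw [h, map_zero] at hvw
        exact hw0 hvw.symm
      exact ⟨v, hv0, hTlb v hvT hv0, hvw.symm⟩
  -- dimension claim
  have hdim : i ≤ Module.finrank ℂ (Y.map L) := by
    obtain ⟨T', hT'le, hT'rk, _⟩ := mapT ((bb + ritzValue A Y i) / 2)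
      (by linarith) (by linarith)
    calc i = Module.finrank ℂ T' := hT'rk.symm
    _ ≤ Module.finrank ℂ (Y.map L) := Submodule.finrank_mono hT'le
  refine ⟨hdim, ?_⟩
  obtain ⟨η, hη⟩ : ∃ y : ℝ, y = ritzValue A Y i := ⟨_, rfl⟩
  obtain ⟨η', hη'⟩ : ∃ y : ℝ, y = ritzValue A (Y.map L) i := ⟨_, rfl⟩
  rw [← hη, ← hη']
  have hηb : bb < η := by rw [hη]; exact hηi'
  rcases le_or_gt η a with hcase | hcase
  · -- η ≤ a : main case
    have hMle : ∀ s : ℝ, bb < s → s < η →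
        (F^2*a*(s - bb) + νt^2*bb*(a - s)) / (F^2*(s - bb) + νt^2*(a - s)) ≤ η' := by
      intro s hs1 hs2
      have hsa : s ≤ a := le_of_lt (lt_of_lt_of_le hs2 hcase)
      have hden : 0 < F^2*(s - bb) + νt^2*(a - s) := by
        have h1 : 0 < F^2 * (s - bb) := mul_pos (pow_pos hF0 2) (by linarith)
        have h2 : 0 ≤ νt^2 * (a - s) := mul_nonneg (sq_nonneg _) (by linarith)
        linarith
      obtain ⟨T', hT'le, hT'rk, hT'mem⟩ := mapT s hs1 (by rw [← hη]; exact hs2)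
      rw [hη', hSy']
      apply le_csSup (hbdd (Y.map L))
      refine ⟨T', hT'le, hT'rk, ?_⟩
      intro w hw hw0
      obtain ⟨v, hv0, hrv, rfl⟩ := hT'mem w hw hw0
      have hp := pervec hn htlt ht1 ht0 A lam hlam x hx heig f νt hν0 hgt hfhead hftail
        s hs1 v hv0 hrv
      have hbw : bb < rayleigh A (L v) := hp.2.1
      have hcross := hp.2.2.2 hsa
      rw [div_le_iff₀ hden]
      linarith only [hcross, hbw]
    have hden0 : 0 < F^2*(η - bb) + νt^2*(a - η) := by
      have h1 : 0 < F^2 * (η - bb) := mul_pos (pow_pos hF0 2) (by linarith)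
      have h2 : 0 ≤ νt^2 * (a - η) := mul_nonneg (sq_nonneg _) (by linarith)
      linarith
    have hcont : ContinuousAt
        (fun s : ℝ => (F^2*a*(s - bb) + νt^2*bb*(a - s)) / (F^2*(s - bb) + νt^2*(a - s))) η :=
      ContinuousAt.div (by fun_prop) (by fun_prop) hden0.ne'
    have hev : ∀ᶠ s in 𝓝[<] η,
        (F^2*a*(s - bb) + νt^2*bb*(a - s)) / (F^2*(s - bb) + νt^2*(a - s)) ≤ η' := by
      filter_upwards [eventually_nhdsWithin_of_eventually_nhds (eventually_gt_nhds hηb),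
        self_mem_nhdsWithin] with s h1 h2
      exact hMle s h1 h2
    have hMη := le_of_tendsto (hcont.tendsto.mono_left nhdsWithin_le_nhds) hev
    have hnum : F^2*a*(η - bb) + νt^2*bb*(a - η)
        ≤ η' * (F^2*(η - bb) + νt^2*(a - η)) :=
      (div_le_iff₀ hden0).mp hMη
    rcases le_or_gt a η' with hfin | hfin
    · exact Or.inl hfin
    · have hab' : bb < a := lt_of_lt_of_le hηb hcase
      have hbη' : bb < η' := by
        by_contra hc
        push_neg at hc
        have hp1 : 0 < F^2 * (a - bb) * (η - bb) :=
          mul_pos (mul_pos (pow_pos hF0 2) (by linarith)) (by linarith)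
        have hB : 0 ≤ (bb - η') * (F^2*(η - bb) + νt^2*(a - η)) :=
          mul_nonneg (by linarith) hden0.le
        linarith only [hnum, hB, hp1]
      refine Or.inr ⟨div_pos (by linarith) (by linarith), ?_⟩
      rw [div_mul_div_comm, div_le_div_iff₀ (by linarith)
        (mul_pos (pow_pos hF0 2) (by linarith))]
      linarith only [hnum]
  · -- a < η : easy case
    have hbr : bb < (a + η) / 2 := by linarith
    have hrη : (a + η) / 2 < η := by linarith
    have har : a ≤ (a + η) / 2 := by linarith
    obtain ⟨T', hT'le, hT'rk, hT'mem⟩ := mapT ((a + η) / 2) hbr (by rw [← hη]; exact hrη)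
    have hmem : a ≤ η' := by
      rw [hη', hSy']
      apply le_csSup (hbdd (Y.map L))
      refine ⟨T', hT'le, hT'rk, ?_⟩
      intro w hw hw0
      obtain ⟨v, hv0, hrv, rfl⟩ := hT'mem w hw hw0
      exact (pervec hn htlt ht1 ht0 A lam hlam x hx heig f νt hν0 hgt hfhead hftail
        _ hbr v hv0 hrv).2.2.1 har
    exact Or.inl hmem
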